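/- arXiv:1712.01052 — 2 statements merged into one kernel-verified Lean document; each statement's English description precedes it below -/
import Mathlib

section
/- For every n ∈ ℕ, every invariant length function ℓ on the symmetric group Sym(n) satisfies ℓ(σ^k) ≤ 3ℓ(σ) for every σ ∈ Sym(n) and every k ∈ ℤ. -/
private lemma cop_shift {x y z : ℤ} (h : IsCoprime x y) : IsCoprime (x + y * z) y := by
  obtain ⟨a, b, hab⟩ := h
  exact ⟨a, b - a * z, by linear_combination hab⟩

/-- Every even integer is a sum of two integers coprime to `N`. -/
private lemma exists_coprime_split :
    ∀ (N : ℕ) (k : ℤ), Even k → 0 < N →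
      ∃ x : ℤ, IsCoprime x (N : ℤ) ∧ IsCoprime (k - x) (N : ℤ) := by
  intro N
  induction N using Nat.recOnPosPrimePosCoprime with
  | prime_pow p e hp he =>
      intro k hk _
      have hpZ : Prime (p : ℤ) := Nat.prime_iff_prime_int.mp hp
      have hred : ∀ y : ℤ, ¬ (p : ℤ) ∣ y → IsCoprime y (((p ^ e : ℕ) : ℤ)) := by
        intro y hy
        have : IsCoprime y ((p : ℤ) ^ e) :=
          (IsCoprime.pow_right_iff he).mpr (isCoprime_comm.mp (hpZ.coprime_iff_not_dvd.mpr hy))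
        simpa using this
      by_cases hdk1 : (p : ℤ) ∣ (k - 1)
      · refine ⟨2, hred 2 ?_, hred _ ?_⟩
        · intro hp2
          have hp2' : p = 2 := by
            have h2 : (p : ℤ) ∣ ((2 : ℕ) : ℤ) := by exact_mod_cast hp2
            exact (Nat.prime_dvd_prime_iff_eq hp Nat.prime_two).mp
              ((Int.natCast_dvd_natCast).mp h2)
          obtain ⟨m, hm⟩ := hk
          subst hp2'
          push_cast at hdk1
          omega
        · intro hdk2
          have h1 : (p : ℤ) ∣ 1 := by
            have := dvd_sub hdk1 hdk2
            simpa using this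
          exact hpZ.not_dvd_one h1
      · exact ⟨1, hred 1 (by simpa using hpZ.not_dvd_one), hred _ hdk1⟩
  | zero => intro k _ h; exact absurd h (lt_irrefl 0)
  | one => intro k _ _; exact ⟨1, isCoprime_one_right, isCoprime_one_right⟩
  | coprime a b ha hb hab Pa Pb =>
      intro k hk _
      obtain ⟨x₁, hx₁, hy₁⟩ := Pa k hk (by omega)
      obtain ⟨x₂, hx₂, hy₂⟩ := Pb k hk (by omega)
      obtain ⟨u, v, huv⟩ : IsCoprime ((a : ℤ)) ((b : ℤ)) := Nat.isCoprime_iff_coprime.mpr hab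
      refine ⟨x₁ + (a : ℤ) * (u * (x₂ - x₁)), ?_, ?_⟩
      · have hca : IsCoprime (x₁ + (a : ℤ) * (u * (x₂ - x₁))) (a : ℤ) := cop_shift hx₁
        have hform : x₁ + (a : ℤ) * (u * (x₂ - x₁)) = x₂ + (b : ℤ) * (-v * (x₂ - x₁)) := by
          linear_combination (x₂ - x₁) * huv
        have hcb : IsCoprime (x₁ + (a : ℤ) * (u * (x₂ - x₁))) (b : ℤ) := by
          rw [hform]; exact cop_shift hx₂
        have := hca.mul_right hcb
        simpa [Nat.cast_mul] using this
      · have hca : IsCoprime (k - (x₁ + (a : ℤ) * (u * (x₂ - x₁)))) (a : ℤ) := by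
          have : k - (x₁ + (a : ℤ) * (u * (x₂ - x₁))) = (k - x₁) + (a : ℤ) * (-(u * (x₂ - x₁))) := by
            ring
          rw [this]; exact cop_shift hy₁
        have hcb : IsCoprime (k - (x₁ + (a : ℤ) * (u * (x₂ - x₁)))) (b : ℤ) := by
          have : k - (x₁ + (a : ℤ) * (u * (x₂ - x₁))) = (k - x₂) + (b : ℤ) * (v * (x₂ - x₁)) := by
            linear_combination (x₁ - x₂) * huv
          rw [this]; exact cop_shift hy₂
        have := hca.mul_right hcb
        simpa [Nat.cast_mul] using this

/-- Raising a permutation to a power coprime to its order preserves the cycle type. -/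
private lemma cycleType_pow_coprime {α : Type*} [Fintype α] [DecidableEq α]
    (σ : Equiv.Perm α) : ∀ t : ℕ, Nat.Coprime t (orderOf σ) →
      (σ ^ t).cycleType = σ.cycleType := by
  induction σ using Equiv.Perm.cycle_induction_on with
  | base_one => simp
  | base_cycles c hc =>
      intro t ht
      have hct : (c ^ t).IsCycle := hc.pow_iff.mpr ht
      rw [hct.cycleType, hc.cycleType, Equiv.Perm.support_pow_coprime ht]
  | induction_disjoint f g hfg hf Pf Pg =>
      intro t ht
      rw [hfg.orderOf] at ht
      have htf := Nat.Coprime.coprime_dvd_right (Nat.dvd_lcm_left _ _) ht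
      have htg := Nat.Coprime.coprime_dvd_right (Nat.dvd_lcm_right _ _) ht
      rw [hfg.commute.mul_pow, Equiv.Perm.Disjoint.cycleType_mul (hfg.pow_disjoint_pow t t), hfg.cycleType_mul,
        Pf t htf, Pg t htg]

/-- Every invariant length function `ℓ` on the symmetric group `Sym(n)` satisfies
`ℓ(σᵏ) ≤ 3 ℓ(σ)` for all `σ` and all `k ∈ ℤ`. -/
theorem invariant_length_pow_le_three_mul
    (n : ℕ) (ℓ : Equiv.Perm (Fin n) → ℝ)
    (hnonneg : ∀ σ, 0 ≤ ℓ σ)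
    (hzero : ∀ σ, ℓ σ = 0 ↔ σ = 1)
    (hinv : ∀ σ, ℓ σ⁻¹ = ℓ σ)
    (hsub : ∀ σ τ, ℓ (σ * τ) ≤ ℓ σ + ℓ τ)
    (hconj : ∀ σ τ, ℓ (τ * σ * τ⁻¹) = ℓ σ) :
    ∀ (σ : Equiv.Perm (Fin n)) (k : ℤ), ℓ (σ ^ k) ≤ 3 * ℓ σ := by
  intro σ k
  set N := orderOf σ with hNdef
  have hN0 : 0 < N := (isOfFinOrder_of_finite σ).orderOf_pos
  have hNne : ((N : ℤ)) ≠ 0 := by exact_mod_cast hN0.ne'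
  -- key: coprime powers of σ have the same length
  have key : ∀ x : ℤ, IsCoprime x (N : ℤ) → ℓ (σ ^ x) = ℓ σ := by
    intro x hx
    have hrnn : (0 : ℤ) ≤ x % (N : ℤ) := Int.emod_nonneg x hNne
    set r : ℕ := (x % (N : ℤ)).toNat with hrdef
    have hrx : (r : ℤ) = x % (N : ℤ) := Int.toNat_of_nonneg hrnn
    have hmod : σ ^ x = σ ^ r := by
      have h1 : σ ^ x = σ ^ (x % (N : ℤ)) := by
        conv_lhs => rw [← Int.mul_ediv_add_emod x (N : ℤ)]
        rw [zpow_add, zpow_mul, zpow_natCast, pow_orderOf_eq_one, one_zpow, one_mul]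
      rw [h1, ← hrx, zpow_natCast]
    have hcop : Nat.Coprime r N := by
      apply Nat.isCoprime_iff_coprime.mp
      rw [hrx]
      have h2 : x % (N : ℤ) = x + (N : ℤ) * (-(x / (N : ℤ))) := by
        rw [Int.emod_def]; ring
      rw [h2]
      exact cop_shift hx
    have hconj' : IsConj σ (σ ^ r) :=
      Equiv.Perm.isConj_iff_cycleType_eq.mpr (cycleType_pow_coprime σ r hcop).symm
    obtain ⟨c, hc⟩ := isConj_iff.mp hconj'
    rw [hmod, ← hc, hconj]
  rcases Int.even_or_odd k with hk | hk
  · obtain ⟨x, hx1, hx2⟩ := exists_coprime_split N k hk hN0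
    have hsplit : σ ^ k = σ ^ x * σ ^ (k - x) := by
      rw [← zpow_add]; congr 1; ring
    calc ℓ (σ ^ k) = ℓ (σ ^ x * σ ^ (k - x)) := by rw [hsplit]
      _ ≤ ℓ (σ ^ x) + ℓ (σ ^ (k - x)) := hsub _ _
      _ = 2 * ℓ σ := by rw [key x hx1, key _ hx2]; ring
      _ ≤ 3 * ℓ σ := by nlinarith [hnonneg σ]
  · have hk1 : Even (k - 1) := by
      rcases hk with ⟨m, hm⟩; exact ⟨m, by omega⟩
    obtain ⟨x, hx1, hx2⟩ := exists_coprime_split N (k - 1) hk1 hN0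
    have hsplit : σ ^ k = σ ^ x * σ ^ (k - 1 - x) * σ := by
      have h3 : σ ^ x * σ ^ (k - 1 - x) * σ = σ ^ (x + (k - 1 - x) + 1) := by
        rw [zpow_add, zpow_add, zpow_one]
      rw [h3]; congr 1; ring
    calc ℓ (σ ^ k) = ℓ (σ ^ x * σ ^ (k - 1 - x) * σ) := by rw [hsplit]
      _ ≤ ℓ (σ ^ x * σ ^ (k - 1 - x)) + ℓ σ := hsub _ _
      _ ≤ ℓ (σ ^ x) + ℓ (σ ^ (k - 1 - x)) + ℓ σ := by
          linarith [hsub (σ ^ x) (σ ^ (k - 1 - x))]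
      _ = 3 * ℓ σ := by rw [key x hx1, key _ hx2]; ring
end

section
/- For every k ∈ ℕ and every ε > 0, there exists a non-trivial element w of the free group F₂ on two generators such that ‖w(a,b) − 1‖ < ε for all a,b ∈ SU(k), where w(a,b) denotes the evaluation of the word w at a and b and ‖·‖ is the operator norm on k×k complex matrices. -/
/-- The special unitary group `SU(k)`, realized as the subgroup of the unitary group
`U(k) = unitaryGroup (Fin k) ℂ` consisting of the matrices of determinant `1`. -/
def SU (k : ℕ) : Subgroup (Matrix.unitaryGroup (Fin k) ℂ) where
  carrier := {A | (A : Matrix (Fin k) (Fin k) ℂ).det = 1}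
  one_mem' := by simp
  mul_mem' := by
    intro a b ha hb
    simp only [Set.mem_setOf_eq, Matrix.UnitaryGroup.mul_val, Matrix.det_mul] at *
    rw [ha, hb, mul_one]
  inv_mem' := by
    intro a ha
    simp only [Set.mem_setOf_eq, Matrix.UnitaryGroup.inv_val] at *
    rw [Matrix.star_eq_conjTranspose, Matrix.det_conjTranspose, ha, star_one]

/-- The `ℓ² → ℓ²` operator norm of a complex `k × k` matrix. -/
noncomputable def opNorm {k : ℕ} (A : Matrix (Fin k) (Fin k) ℂ) : ℝ :=
  ‖Matrix.toEuclideanCLM (𝕜 := ℂ) A‖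

set_option linter.unusedSectionVars false
set_option maxHeartbeats 1000000

namespace AlmostLawAux


abbrev F2 := FreeGroup (Fin 2)
abbrev Letter := Fin 2 × Bool

abbrev rel (a b : Letter) : Prop := ¬(a.1 = b.1 ∧ a.2 = !b.2)

lemma reduce_of_chain' : ∀ {L : List Letter}, List.Chain' rel L → FreeGroup.reduce L = L
  | [], _ => rfl
  | [_], _ => rfl
  | x :: y :: t, h => by
    have ht : FreeGroup.reduce (y :: t) = y :: t := reduce_of_chain' (List.isChain_cons_cons.mp h).2
    rw [FreeGroup.reduce.cons, ht]
    show (if x.1 = y.1 ∧ x.2 = !y.2 then t else x :: y :: t) = x :: y :: t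
    exact if_neg (List.isChain_cons_cons.mp h).1

def Xg : F2 := FreeGroup.of 0
def Yg : F2 := FreeGroup.of 1

def Nice (g : F2) : Prop :=
  ∃ L : List Letter, g = FreeGroup.mk L ∧ List.Chain' rel L ∧
    L.head? = some (1, true) ∧ L.getLast? = some (1, false)

lemma Nice.ne_one {g : F2} (h : Nice g) : g ≠ 1 := by
  obtain ⟨L, hg, hc, hh, -⟩ := h
  intro h1
  have h2 : g.toWord = [] := by rw [h1, FreeGroup.toWord_one]
  rw [hg, FreeGroup.toWord_mk, reduce_of_chain' hc] at h2
  subst h2; simp at hh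

lemma head?_append_some {l₁ l₂ : List Letter} {a : Letter} (h : l₁.head? = some a) :
    (l₁ ++ l₂).head? = some a := by
  cases l₁ <;> simp_all

lemma getLast?_append_some {l₁ l₂ : List Letter} {a : Letter} (h : l₂.getLast? = some a) :
    (l₁ ++ l₂).getLast? = some a := by
  rw [List.getLast?_append_of_ne_nil]
  · exact h
  · intro hnil; rw [hnil] at h; simp at h

lemma chain'_replicate_rel {a : Letter} (h : rel a a) : ∀ m, List.Chain' rel (List.replicate m a)
  | 0 => List.isChain_nil
  | 1 => List.isChain_singleton a
  | (m+2) => by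
    rw [List.replicate_succ, List.replicate_succ]
    refine List.isChain_cons_cons.mpr ⟨h, ?_⟩
    rw [← List.replicate_succ]
    exact chain'_replicate_rel h (m+1)

def flipL (p : Letter) : Letter := (p.1, !p.2)

lemma invRev_eq (L : List Letter) : FreeGroup.invRev L = (L.map flipL).reverse := rfl

lemma chain'_invRev {L : List Letter} (h : List.Chain' rel L) :
    List.Chain' rel (FreeGroup.invRev L) := by
  unfold List.Chain' at h ⊢
  rw [invRev_eq, List.isChain_reverse, List.isChain_map]
  refine h.imp ?_
  rintro ⟨a1, a2⟩ ⟨b1, b2⟩ hab ⟨h1, h2⟩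
  refine hab ⟨h1.symm, ?_⟩
  simp only [flipL] at h2
  revert h2; cases a2 <;> cases b2 <;> simp

lemma head?_invRev {L : List Letter} {a : Letter} (h : L.getLast? = some a) :
    (FreeGroup.invRev L).head? = some (flipL a) := by
  induction L using List.reverseRecOn with
  | nil => simp at h
  | append_singleton l b _ =>
    rw [List.getLast?_concat] at h
    cases h
    rw [invRev_eq]
    simp

lemma getLast?_invRev {L : List Letter} {a : Letter} (h : L.head? = some a) :
    (FreeGroup.invRev L).getLast? = some (flipL a) := by
  cases L with
  | nil => simp at h
  | cons c t =>
    cases h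
    rw [invRev_eq]
    simp [List.getLast?_concat]

lemma pow_Xg (m : ℕ) : Xg ^ m = FreeGroup.mk (List.replicate m ((0 : Fin 2), true)) := by
  conv_lhs => rw [Xg, ← FreeGroup.mk_toWord (x := FreeGroup.of (0 : Fin 2) ^ m)]
  rw [FreeGroup.toWord_of_pow]

lemma invRev_replicate (m : ℕ) (i : Fin 2) (b : Bool) :
    FreeGroup.invRev (List.replicate m (i, b)) = List.replicate m (i, !b) := by
  rw [invRev_eq]
  simp [List.map_replicate, flipL]

lemma invRev_append' (L₁ L₂ : List Letter) :
    FreeGroup.invRev (L₁ ++ L₂) = FreeGroup.invRev L₂ ++ FreeGroup.invRev L₁ := by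
  simp [invRev_eq]

lemma glue {l₁ l₂ : List Letter} {a b : Letter} (h₁ : List.Chain' rel l₁)
    (h₂ : List.Chain' rel l₂) (e₁ : l₁.getLast? = some a) (e₂ : l₂.head? = some b)
    (hr : rel a b) : List.Chain' rel (l₁ ++ l₂) := by
  refine h₁.append h₂ ?_
  intro x hx y hy
  rw [e₁, Option.mem_some_iff] at hx
  rw [e₂, Option.mem_some_iff] at hy
  subst hx; subst hy; exact hr

lemma nice_step {t : F2} (ht : Nice t) (m : ℕ) (hm : 1 ≤ m) :
    Nice (Yg * (t * (Xg ^ m * t * (Xg ^ m)⁻¹) * t⁻¹ * (Xg ^ m * t * (Xg ^ m)⁻¹)⁻¹) * Yg⁻¹) := by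
  obtain ⟨L, rfl, hc, hh, hl⟩ := ht
  obtain ⟨m', rfl⟩ : ∃ m', m = m' + 1 := ⟨m - 1, by omega⟩
  set P : List Letter := List.replicate (m' + 1) ((0 : Fin 2), true) with hP
  set N : List Letter := List.replicate (m' + 1) ((0 : Fin 2), false) with hN
  set I : List Letter := FreeGroup.invRev L with hI
  have hxp : Xg ^ (m' + 1) = FreeGroup.mk P := pow_Xg _
  have hy : Yg = FreeGroup.mk [((1 : Fin 2), true)] := rfl
  refine ⟨[((1 : Fin 2), true)] ++ L ++ P ++ L ++ N ++ I ++ P ++ I ++ N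
      ++ [((1 : Fin 2), false)], ?_, ?_, ?_, ?_⟩
  · simp only [hxp, hy, FreeGroup.inv_mk, FreeGroup.mul_mk]
    congr 1
    simp only [hP, hN, hI, invRev_append', invRev_replicate, Bool.not_true, Bool.not_false]
    have e1 : FreeGroup.invRev [((1 : Fin 2), true)] = [((1 : Fin 2), false)] := rfl
    rw [e1]
    simp [List.append_assoc]
  · -- Chain'
    have hcP : List.Chain' rel P := chain'_replicate_rel (by decide) _
    have hcN : List.Chain' rel N := chain'_replicate_rel (by decide) _
    have hcI : List.Chain' rel I := chain'_invRev hc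
    have hPh : P.head? = some ((0 : Fin 2), true) := by rw [hP, List.replicate_succ]; rfl
    have hNh : N.head? = some ((0 : Fin 2), false) := by rw [hN, List.replicate_succ]; rfl
    have hPl : P.getLast? = some ((0 : Fin 2), true) := by
      rw [hP, List.replicate_succ', List.getLast?_concat]
    have hNl : N.getLast? = some ((0 : Fin 2), false) := by
      rw [hN, List.replicate_succ', List.getLast?_concat]
    have hIh : I.head? = some ((1 : Fin 2), true) := by
      rw [hI]; exact head?_invRev hl
    have hIl : I.getLast? = some ((1 : Fin 2), false) := by
      rw [hI]; exact getLast?_invRev hh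
    refine glue ?_ (List.isChain_singleton _) (getLast?_append_some hNl)
      (show ([((1 : Fin 2), false)] : List Letter).head? = some (1, false) from rfl) (by decide)
    refine glue ?_ hcN (getLast?_append_some hIl) hNh (by decide)
    refine glue ?_ hcI (getLast?_append_some hPl) hIh (by decide)
    refine glue ?_ hcP (getLast?_append_some hIl) hPh (by decide)
    refine glue ?_ hcI (getLast?_append_some hNl) hIh (by decide)
    refine glue ?_ hcN (getLast?_append_some hl) hNh (by decide)
    refine glue ?_ hc (getLast?_append_some hPl) hh (by decide)
    refine glue ?_ hcP (getLast?_append_some hl) hPh (by decide)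
    exact glue (List.isChain_singleton _) hc
      (show ([((1 : Fin 2), true)] : List Letter).getLast? = some (1, true) from rfl) hh (by decide)
  · exact head?_append_some (head?_append_some (head?_append_some (head?_append_some
      (head?_append_some (head?_append_some (head?_append_some (head?_append_some
      (head?_append_some rfl))))))))
  · exact getLast?_append_some rfl


def wrd : ℕ → F2
  | 0 => Yg * Xg * Yg⁻¹
  | (j+1) => Yg * (wrd j * (Xg ^ (j+1) * wrd j * (Xg ^ (j+1))⁻¹) * (wrd j)⁻¹ *
      (Xg ^ (j+1) * wrd j * (Xg ^ (j+1))⁻¹)⁻¹) * Yg⁻¹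

lemma nice_wrd : ∀ j, Nice (wrd j)
  | 0 => by
    refine ⟨[((1 : Fin 2), true), ((0 : Fin 2), true), ((1 : Fin 2), false)], ?_, ?_, rfl, rfl⟩
    · show Yg * Xg * Yg⁻¹ = _
      have hy : Yg = FreeGroup.mk [((1 : Fin 2), true)] := rfl
      have hx : Xg = FreeGroup.mk [((0 : Fin 2), true)] := rfl
      rw [hy, hx, FreeGroup.inv_mk, FreeGroup.mul_mk, FreeGroup.mul_mk]
      rfl
    · exact List.isChain_cons_cons.mpr ⟨by decide, List.isChain_cons_cons.mpr ⟨by decide, List.isChain_singleton _⟩⟩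
  | (j+1) => nice_step (nice_wrd j) (j+1) (by omega)

lemma wrd_ne_one (j : ℕ) : wrd j ≠ 1 := (nice_wrd j).ne_one

lemma wrd_succ (j : ℕ) : wrd (j+1) = Yg * (wrd j * (Xg ^ (j+1) * wrd j * (Xg ^ (j+1))⁻¹) *
    (wrd j)⁻¹ * (Xg ^ (j+1) * wrd j * (Xg ^ (j+1))⁻¹)⁻¹) * Yg⁻¹ := rfl

section CStar2

variable {A : Type*} [NormedRing A] [StarRing A] [CStarRing A]

lemma norm_unitary_le (h1 : ‖(1 : A)‖ ≤ 1) (u : unitary A) : ‖(u : A)‖ ≤ 1 := by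
  have h := CStarRing.norm_star_mul_self (x := (u : A))
  have h2 : star (u : A) * (u : A) = 1 := Unitary.star_mul_self_of_mem u.2
  rw [h2] at h
  nlinarith [norm_nonneg (u : A)]

lemma coe_mul_inv (u : unitary A) : (u : A) * (↑(u⁻¹) : A) = 1 := by
  rw [← MulMemClass.coe_mul, mul_inv_cancel, OneMemClass.coe_one]

lemma norm_commutator_le (x y : A) : ‖x * y - y * x‖ ≤ 2 * ‖x - 1‖ * ‖y - 1‖ := by
  have hid : x * y - y * x = (x - 1) * (y - 1) - (y - 1) * (x - 1) := by noncomm_ring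
  rw [hid]
  calc ‖(x - 1) * (y - 1) - (y - 1) * (x - 1)‖
      ≤ ‖(x - 1) * (y - 1)‖ + ‖(y - 1) * (x - 1)‖ := norm_sub_le _ _
    _ ≤ ‖x - 1‖ * ‖y - 1‖ + ‖y - 1‖ * ‖x - 1‖ := add_le_add (norm_mul_le _ _) (norm_mul_le _ _)
    _ = 2 * ‖x - 1‖ * ‖y - 1‖ := by ring

lemma norm_commutator_le' (x y : A) (hx : ‖x‖ ≤ 1) : ‖x * y - y * x‖ ≤ 2 * ‖y - x‖ := by
  have hid : x * y - y * x = x * (y - x) - (y - x) * x := by noncomm_ring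
  rw [hid]
  have b1 := norm_mul_le x (y - x)
  have b2 := norm_mul_le (y - x) x
  have b3 := norm_sub_le (x * (y - x)) ((y - x) * x)
  nlinarith [norm_nonneg (y - x)]

lemma norm_commutator_le'' (x y : A) (hy : ‖y‖ ≤ 1) : ‖x * y - y * x‖ ≤ 2 * ‖x - 1‖ := by
  have hid : x * y - y * x = (x - 1) * y - y * (x - 1) := by noncomm_ring
  rw [hid]
  have b1 := norm_mul_le (x - 1) y
  have b2 := norm_mul_le y (x - 1)
  have b3 := norm_sub_le ((x - 1) * y) (y * (x - 1))
  nlinarith [norm_nonneg (x - 1)]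

lemma key_factor (h1 : ‖(1 : A)‖ ≤ 1) (t v : unitary A) :
    ‖(↑(t * v * t⁻¹ * v⁻¹) : A) - 1‖ ≤ ‖(t : A) * (v : A) - (v : A) * (t : A)‖ := by
  have htt : (t : A) * (↑(t⁻¹) : A) = 1 := coe_mul_inv t
  have hvv : (v : A) * (↑(v⁻¹) : A) = 1 := coe_mul_inv v
  have hfact : (↑(t * v * t⁻¹ * v⁻¹) : A) - 1
      = ((t : A) * v - (v : A) * t) * (↑(t⁻¹) : A) * (↑(v⁻¹) : A) := by
    have e1 : (v : A) * (t : A) * (↑(t⁻¹) : A) * (↑(v⁻¹) : A) = 1 := by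
      rw [mul_assoc ((v : A)) ((t : A)), htt, mul_one, hvv]
    simp only [MulMemClass.coe_mul]
    rw [sub_mul, sub_mul, e1]
  rw [hfact]
  have a1 := norm_mul_le (((t : A) * v - (v : A) * t) * (↑(t⁻¹) : A)) ((↑(v⁻¹) : A))
  have a2 := norm_mul_le ((t : A) * v - (v : A) * t) ((↑(t⁻¹) : A))
  have b1 := norm_unitary_le h1 t⁻¹
  have b2 := norm_unitary_le h1 v⁻¹
  nlinarith [norm_nonneg ((t : A) * v - (v : A) * t),
    norm_nonneg (((t : A) * v - (v : A) * t) * (↑(t⁻¹) : A))]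

lemma conj_sub_one (h1 : ‖(1 : A)‖ ≤ 1) (g w : unitary A) :
    ‖(↑(g * w * g⁻¹) : A) - 1‖ ≤ ‖(w : A) - 1‖ := by
  have hfact : (↑(g * w * g⁻¹) : A) - 1 = (g : A) * ((w : A) - 1) * (↑(g⁻¹) : A) := by
    simp only [MulMemClass.coe_mul]
    rw [mul_sub, mul_one, sub_mul, coe_mul_inv g]
  rw [hfact]
  have a1 := norm_mul_le ((g : A) * ((w : A) - 1)) ((↑(g⁻¹) : A))
  have a2 := norm_mul_le ((g : A)) ((w : A) - 1)
  have b1 := norm_unitary_le h1 g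
  have b2 := norm_unitary_le h1 g⁻¹
  nlinarith [norm_nonneg ((w : A) - 1), norm_nonneg ((g : A) * ((w : A) - 1))]

lemma conj_dist (h1 : ‖(1 : A)‖ ≤ 1) (c t : unitary A) :
    ‖(↑(c * t * c⁻¹) : A) - (t : A)‖ ≤ 2 * ‖(c : A) - 1‖ := by
  have hfact : (↑(c * t * c⁻¹) : A) - (t : A)
      = ((c : A) * (t : A) - (t : A) * (c : A)) * (↑(c⁻¹) : A) := by
    simp only [MulMemClass.coe_mul]
    rw [sub_mul, mul_assoc ((t : A)) ((c : A)), coe_mul_inv c, mul_one]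
  rw [hfact]
  have hcomm := norm_commutator_le'' ((c : A)) ((t : A)) (norm_unitary_le h1 t)
  have a1 := norm_mul_le ((c : A) * (t : A) - (t : A) * (c : A)) ((↑(c⁻¹) : A))
  have b1 := norm_unitary_le h1 c⁻¹
  nlinarith [norm_nonneg ((c : A) * (t : A) - (t : A) * (c : A))]

lemma step_bound_shrink (h1 : ‖(1 : A)‖ ≤ 1) (v c t : unitary A) :
    ‖(↑(v * (t * (c * t * c⁻¹) * t⁻¹ * (c * t * c⁻¹)⁻¹) * v⁻¹) : A) - 1‖
      ≤ 2 * (‖(t : A) - 1‖ * ‖(t : A) - 1‖) := by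
  have h0 := conj_sub_one h1 v (t * (c * t * c⁻¹) * t⁻¹ * (c * t * c⁻¹)⁻¹)
  have h2 := key_factor h1 t (c * t * c⁻¹)
  have h3 := norm_commutator_le ((t : A)) ((↑(c * t * c⁻¹) : A))
  have h4 : ‖(↑(c * t * c⁻¹) : A) - 1‖ ≤ ‖(t : A) - 1‖ := conj_sub_one h1 c t
  nlinarith [norm_nonneg ((t : A) - 1), norm_nonneg ((↑(c * t * c⁻¹) : A) - 1)]

lemma step_bound_capture (h1 : ‖(1 : A)‖ ≤ 1) (v c t : unitary A) :
    ‖(↑(v * (t * (c * t * c⁻¹) * t⁻¹ * (c * t * c⁻¹)⁻¹) * v⁻¹) : A) - 1‖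
      ≤ 4 * ‖(c : A) - 1‖ := by
  have h0 := conj_sub_one h1 v (t * (c * t * c⁻¹) * t⁻¹ * (c * t * c⁻¹)⁻¹)
  have h2 := key_factor h1 t (c * t * c⁻¹)
  have h3 := norm_commutator_le' ((t : A)) ((↑(c * t * c⁻¹) : A)) (norm_unitary_le h1 t)
  have h4 := conj_dist h1 c t
  nlinarith [norm_nonneg ((↑(c * t * c⁻¹) : A) - (t : A))]

end CStar2


section Mat
open scoped Matrix.Norms.L2Operator

variable {k : ℕ}

local notation "Mk" => Matrix (Fin k) (Fin k) ℂ

lemma mat_norm_one_le : ‖(1 : Mk)‖ ≤ 1 := by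
  rw [Matrix.cstar_norm_def, map_one, ContinuousLinearMap.one_def]
  exact ContinuousLinearMap.norm_id_le

lemma dirichlet (δ : ℝ) (hδ : 0 < δ) :
    ∃ N : ℕ, ∀ u : unitary Mk, ∃ n : ℕ, 1 ≤ n ∧ n ≤ N ∧
      ‖((u ^ n : unitary Mk) : Mk) - 1‖ ≤ δ := by
  haveI : ProperSpace Mk := FiniteDimensional.proper ℂ Mk
  have hcomp : IsCompact (Metric.closedBall (0 : Mk) 1) := isCompact_closedBall _ _
  obtain ⟨s, hsfin, hscov⟩ := (Metric.totallyBounded_iff.mp hcomp.totallyBounded) (δ / 2)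
    (by linarith)
  set t := hsfin.toFinset with ht
  refine ⟨t.card, fun u => ?_⟩
  have hmem : ∀ n : ℕ, ((u ^ n : unitary Mk) : Mk) ∈ Metric.closedBall (0 : Mk) 1 := by
    intro n
    rw [Metric.mem_closedBall, dist_zero_right]
    exact norm_unitary_le mat_norm_one_le (u ^ n)
  have hchoice : ∀ n : Fin (t.card + 1), ∃ y, y ∈ s ∧
      ((u ^ (n : ℕ) : unitary Mk) : Mk) ∈ Metric.ball y (δ / 2) := by
    intro n
    have := hscov (hmem (n : ℕ))
    simpa using this
  choose f hf1 hf2 using hchoice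
  obtain ⟨i, j, hij, he⟩ := Fintype.exists_ne_map_eq_of_card_lt
    (fun n : Fin (t.card + 1) => (⟨f n, (hsfin.mem_toFinset).mpr (hf1 n)⟩ : {y // y ∈ t}))
    (by simp [Fintype.card_coe])
  have hfe : f i = f j := by simpa using congrArg Subtype.val he
  -- wlog i < j
  obtain ⟨i, j, hlt, hfe⟩ : ∃ i j : Fin (t.card + 1), i < j ∧ f i = f j := by
    rcases Ne.lt_or_gt hij with h | h
    · exact ⟨i, j, h, hfe⟩
    · exact ⟨j, i, h, hfe.symm⟩
  have hlt' : (i : ℕ) < (j : ℕ) := hlt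
  refine ⟨(j : ℕ) - (i : ℕ), by omega, ?_, ?_⟩
  · have := j.isLt; omega
  · have hdist : dist ((u ^ (i : ℕ) : unitary Mk) : Mk) ((u ^ (j : ℕ) : unitary Mk) : Mk) < δ := by
      have d1 := Metric.mem_ball.mp (hf2 i)
      have d2 := Metric.mem_ball.mp (hf2 j)
      rw [hfe] at d1
      calc dist ((u ^ (i : ℕ) : unitary Mk) : Mk) ((u ^ (j : ℕ) : unitary Mk) : Mk)
          ≤ dist ((u ^ (i : ℕ) : unitary Mk) : Mk) (f j)
            + dist ((u ^ (j : ℕ) : unitary Mk) : Mk) (f j) := dist_triangle_right _ _ _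
        _ < δ / 2 + δ / 2 := add_lt_add d1 d2
        _ = δ := by ring
    have hpow : (u ^ (i : ℕ))⁻¹ * u ^ (j : ℕ) = u ^ ((j : ℕ) - (i : ℕ)) := by
      have hij' : (i : ℕ) + ((j : ℕ) - (i : ℕ)) = (j : ℕ) := by omega
      rw [← hij', pow_add, inv_mul_cancel_left]
      congr 1
      omega
    have hfactor : ((u ^ ((j : ℕ) - (i : ℕ)) : unitary Mk) : Mk) - 1
        = ((↑((u ^ (i : ℕ))⁻¹) : Mk)) * (((u ^ (j : ℕ) : unitary Mk) : Mk)
          - ((u ^ (i : ℕ) : unitary Mk) : Mk)) := by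
      rw [mul_sub, ← MulMemClass.coe_mul, ← MulMemClass.coe_mul, hpow, inv_mul_cancel,
        OneMemClass.coe_one]
    rw [hfactor]
    have a1 := norm_mul_le ((↑((u ^ (i : ℕ))⁻¹) : Mk)) (((u ^ (j : ℕ) : unitary Mk) : Mk)
      - ((u ^ (i : ℕ) : unitary Mk) : Mk))
    have b1 := norm_unitary_le mat_norm_one_le ((u ^ (i : ℕ))⁻¹)
    rw [dist_eq_norm] at hdist
    have hd : ‖((u ^ (i : ℕ) : unitary Mk) : Mk) - ((u ^ (j : ℕ) : unitary Mk) : Mk)‖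
        = ‖((u ^ (j : ℕ) : unitary Mk) : Mk) - ((u ^ (i : ℕ) : unitary Mk) : Mk)‖ :=
      norm_sub_rev _ _
    nlinarith [norm_nonneg (((u ^ (j : ℕ) : unitary Mk) : Mk) - ((u ^ (i : ℕ) : unitary Mk) : Mk))]

end Mat

end AlmostLawAux

section Final
open AlmostLawAux
open scoped Matrix.Norms.L2Operator

/-- For every `k` and every `ε > 0` there is a non-trivial word `w ∈ F₂` such that
`‖w(a,b) - 1‖ < ε` (in operator norm) for all `a, b ∈ SU(k)`. -/
theorem exists_word_almost_law_on_SU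
    (k : ℕ) (ε : ℝ) (hε : 0 < ε) :
    ∃ w : FreeGroup (Fin 2), w ≠ 1 ∧
      ∀ a b : SU k,
        opNorm (((FreeGroup.lift ![a, b] w : SU k) :
          Matrix (Fin k) (Fin k) ℂ) - 1) < ε := by
  have hδ : (0 : ℝ) < min (ε / 8) (1 / 8) := lt_min (by linarith) (by norm_num)
  set δ := min (ε / 8) (1 / 8) with hδdef
  obtain ⟨N, hN⟩ := dirichlet (k := k) δ hδ
  refine ⟨wrd N, wrd_ne_one N, ?_⟩
  intro a b
  set u : unitary (Matrix (Fin k) (Fin k) ℂ) := (a : Matrix.unitaryGroup (Fin k) ℂ) with hu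
  set v : unitary (Matrix (Fin k) (Fin k) ℂ) := (b : Matrix.unitaryGroup (Fin k) ℂ) with hv
  set W : FreeGroup (Fin 2) →* unitary (Matrix (Fin k) (Fin k) ℂ) :=
    FreeGroup.lift ![u, v] with hW
  have hcomm : ((SU k).subtype).comp (FreeGroup.lift ![a, b]) = W := by
    apply FreeGroup.ext_hom
    intro i
    fin_cases i <;>
      simp [hW, hu, hv, FreeGroup.lift_apply_of, MonoidHom.comp_apply]
  have hval : ((FreeGroup.lift ![a, b] (wrd N) : SU k) : Matrix (Fin k) (Fin k) ℂ)
      = ((W (wrd N) : unitary (Matrix (Fin k) (Fin k) ℂ)) : Matrix (Fin k) (Fin k) ℂ) := by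
    have h := DFunLike.congr_fun hcomm (wrd N)
    exact congrArg (fun z : unitary (Matrix (Fin k) (Fin k) ℂ) => (z : Matrix (Fin k) (Fin k) ℂ)) h
  show ‖(((FreeGroup.lift ![a, b] (wrd N) : SU k) : Matrix (Fin k) (Fin k) ℂ) - 1)‖ < ε
  rw [hval]
  have hx : W Xg = u := by simp [hW, Xg, FreeGroup.lift_apply_of]
  have hy : W Yg = v := by simp [hW, Yg, FreeGroup.lift_apply_of]
  have hTstep : ∀ j : ℕ, W (wrd (j+1)) = v * (W (wrd j) * (u ^ (j+1) * W (wrd j) * (u ^ (j+1))⁻¹) *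
      (W (wrd j))⁻¹ * (u ^ (j+1) * W (wrd j) * (u ^ (j+1))⁻¹)⁻¹) * v⁻¹ := by
    intro j
    rw [wrd_succ j]
    simp only [map_mul, map_inv, map_pow, hx, hy]
  obtain ⟨n₀, hn₀1, hn₀N, hsmall⟩ := hN u
  have main : ∀ d : ℕ,
      ‖((W (wrd (n₀ + d)) : unitary (Matrix (Fin k) (Fin k) ℂ)) : Matrix (Fin k) (Fin k) ℂ) - 1‖
        ≤ 4 * δ := by
    intro d
    induction d with
    | zero =>
      obtain ⟨m, hm⟩ : ∃ m, n₀ = m + 1 := ⟨n₀ - 1, by omega⟩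
      rw [Nat.add_zero, hm, hTstep m]
      have hc := step_bound_capture (mat_norm_one_le (k := k)) v (u ^ (m+1)) (W (wrd m))
      refine hc.trans ?_
      rw [← hm]
      linarith
    | succ d ih =>
      have hstep : n₀ + (d + 1) = (n₀ + d) + 1 := rfl
      rw [hstep, hTstep (n₀ + d)]
      have h2 := step_bound_shrink (mat_norm_one_le (k := k)) v (u ^ (n₀ + d + 1)) (W (wrd (n₀ + d)))
      have hδ8 : δ ≤ 1 / 8 := min_le_right _ _
      nlinarith [norm_nonneg (((W (wrd (n₀ + d)) : unitary (Matrix (Fin k) (Fin k) ℂ)) :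
        Matrix (Fin k) (Fin k) ℂ) - 1)]
  have hfin := main (N - n₀)
  rw [show n₀ + (N - n₀) = N by omega] at hfin
  have hδε : δ ≤ ε / 8 := min_le_left _ _
  linarith

end Final
end
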